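/- A finite group G has exactly |G| − 1 cyclic subgroups if and only if G is isomorphic to C_3, C_4, S_3, or D_8. -/

import Mathlib

open Subgroup

section Helpers

variable {G : Type*} [Group G]

lemma pow_mod_of_pow_eq_one {n : ℕ} {a : G} (ha : a ^ n = 1) (m : ℕ) :
    a ^ (m % n) = a ^ m := by
  rw [pow_eq_pow_iff_modEq]
  exact (Nat.mod_modEq m n).of_dvd (orderOf_dvd_of_pow_eq_one ha)

lemma pow_val_add {n : ℕ} [NeZero n] {a : G} (ha : a ^ n = 1) (i j : ZMod n) :
    a ^ (i + j).val = a ^ i.val * a ^ j.val := by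
  rw [← pow_add, ZMod.val_add, pow_mod_of_pow_eq_one ha]

lemma pow_val_neg {n : ℕ} [NeZero n] {a : G} (ha : a ^ n = 1) (i : ZMod n) :
    a ^ (-i).val = (a ^ i.val)⁻¹ := by
  apply eq_inv_of_mul_eq_one_left
  rw [← pow_val_add ha, neg_add_cancel, ZMod.val_zero, pow_zero]

/-- The homomorphism from the dihedral group given by an order-dividing-`n` element and an
involution conjugating it to its inverse. -/
def dLift {n : ℕ} [NeZero n] (A T : G) (hA : A ^ n = 1) (hT : T * T = 1)
    (hR : T * A * T = A⁻¹) : DihedralGroup n →* G where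
  toFun x := match x with
    | .r i => A ^ i.val
    | .sr i => T * A ^ i.val
  map_one' := by
    show A ^ (0 : ZMod n).val = 1
    rw [ZMod.val_zero, pow_zero]
  map_mul' := by
    have hconj : ∀ k : ℕ, T * A ^ k * T = (A ^ k)⁻¹ := by
      intro k
      induction k with
      | zero => simpa using hT
      | succ k ih =>
          rw [pow_succ, mul_inv_rev, ← ih, ← hR]
          have h1 : T * A * T * (T * A ^ k * T) = T * A * (T * T) * (A ^ k * T) := by group
          rw [h1, hT, mul_one]
          group
    have hTA : ∀ i : ZMod n, A ^ i.val * T = T * A ^ (-i).val := by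
      intro i
      rw [pow_val_neg hA, ← hconj i.val]
      have h1 : T * (T * A ^ i.val * T) = T * T * (A ^ i.val * T) := by group
      rw [h1, hT, one_mul]
    rintro (i | i) (j | j)
    · exact pow_val_add hA i j
    · show T * A ^ (j - i).val = A ^ i.val * (T * A ^ j.val)
      rw [← mul_assoc, hTA, mul_assoc, ← pow_val_add hA, neg_add_eq_sub]
    · show T * A ^ (i + j).val = T * A ^ i.val * A ^ j.val
      rw [mul_assoc, ← pow_val_add hA]
    · show A ^ (j - i).val = T * A ^ i.val * (T * A ^ j.val)
      rw [mul_assoc, ← mul_assoc (A ^ i.val), hTA, ← mul_assoc, ← mul_assoc, hT, one_mul,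
        ← pow_val_add hA, neg_add_eq_sub]

/-- The homomorphism from `Multiplicative (ZMod n)` given by an element whose order divides `n`. -/
def cLift {n : ℕ} [NeZero n] (a : G) (ha : a ^ n = 1) : Multiplicative (ZMod n) →* G where
  toFun i := a ^ (Multiplicative.toAdd i).val
  map_one' := by show a ^ (0 : ZMod n).val = 1; rw [ZMod.val_zero, pow_zero]
  map_mul' i j := pow_val_add ha _ _

end Helpers

section Cases

variable {G : Type*} [Group G] [Finite G]

lemma cyclic_case {n : ℕ} [NeZero n] {a : G} (h1 : orderOf a = n)
    (h2 : ∀ x : G, x ∈ zpowers a) : Nonempty (G ≃* Multiplicative (ZMod n)) := by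
  have ha : a ^ n = 1 := by rw [← h1]; exact pow_orderOf_eq_one a
  have hinj : Function.Injective (cLift a ha) := by
    intro i j hij
    have : (Multiplicative.toAdd i).val = (Multiplicative.toAdd j).val := by
      have := (pow_eq_pow_iff_modEq (x := a)).1 hij
      rwa [h1, Nat.ModEq, Nat.mod_eq_of_lt (ZMod.val_lt _), Nat.mod_eq_of_lt (ZMod.val_lt _)]
        at this
    exact Multiplicative.toAdd.injective (ZMod.val_injective n this)
  have hsurj : Function.Surjective (cLift a ha) := by
    intro x
    obtain ⟨m, hm⟩ := mem_powers_iff_mem_zpowers.2 (h2 x)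
    refine ⟨Multiplicative.ofAdd (m : ZMod n), ?_⟩
    show a ^ (Multiplicative.toAdd (Multiplicative.ofAdd (m : ZMod n))).val = x
    rw [toAdd_ofAdd, ZMod.val_natCast, pow_mod_of_pow_eq_one ha]
    exact hm
  exact ⟨(MulEquiv.ofBijective _ ⟨hinj, hsurj⟩).symm⟩

lemma dihedral_case {n : ℕ} [NeZero n] {a t : G} (h1 : orderOf a = n)
    (ha2 : a * a ≠ 1)
    (hsq : ∀ x : G, x ≠ a → x ≠ a⁻¹ → x * x = 1)
    (ht : t ∉ zpowers a) : Nonempty (G ≃* DihedralGroup n) := by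
  have ha : a ^ n = 1 := by rw [← h1]; exact pow_orderOf_eq_one a
  have hmem : ∀ x : G, x = a ∨ x = a⁻¹ → x ∈ zpowers a := by
    rintro x (h | h) <;> rw [h]
    · exact mem_zpowers a
    · exact inv_mem (mem_zpowers a)
  -- any involution outside ⟨a⟩ that "commutes-like" with a leads to a contradiction
  have key : ∀ x : G, x ∉ zpowers a → x * a = a * x → False := by
    intro x hx hcomm
    have hxx : x * x = 1 := hsq x (fun h => hx (hmem _ (Or.inl h))) (fun h => hx (hmem _ (Or.inr h)))
    have hxa2 : (x * a) * (x * a) = a * a := by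
      calc (x * a) * (x * a) = x * (a * x) * a := by group
        _ = x * (x * a) * a := by rw [hcomm]
        _ = (x * x) * (a * a) := by group
        _ = a * a := by rw [hxx, one_mul]
    have : x * a = a ∨ x * a = a⁻¹ := by
      by_contra hc
      push_neg at hc
      exact ha2 (hxa2 ▸ hsq _ hc.1 hc.2)
    rcases this with h | h
    · have hx1 : x = 1 := by
        have h' : x * a = 1 * a := by rw [h, one_mul]
        exact mul_right_cancel h'
      exact hx (hx1 ▸ one_mem _)
    · apply hx
      have h2 : x = a⁻¹ * a⁻¹ := by
        have := congrArg (fun y => y * a⁻¹) h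
        simpa [mul_assoc] using this
      rw [h2]
      exact mul_mem (inv_mem (mem_zpowers a)) (inv_mem (mem_zpowers a))
  have hconjmem : ∀ x : G, x * x = 1 → x * a * x = a ∨ x * a * x = a⁻¹ := by
    intro x hxx
    have hxinv : x⁻¹ = x := inv_eq_of_mul_eq_one_right hxx
    have hsq2 : (x * a * x) * (x * a * x) ≠ 1 := by
      intro h
      apply ha2
      have h2 : x * (a * a) * x = 1 := by
        calc x * (a * a) * x = x * a * (x * x) * a * x := by rw [hxx]; group
          _ = (x * a * x) * (x * a * x) := by group
          _ = 1 := h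
      calc a * a = x⁻¹ * (x * (a * a) * x) * x⁻¹ := by group
        _ = 1 := by rw [h2, mul_one, hxinv, hxx]
    by_contra hc
    push_neg at hc
    exact hsq2 (hsq _ hc.1 hc.2)
  -- t is an involution
  have htt : t * t = 1 := hsq t (fun h => ht (hmem _ (Or.inl h))) (fun h => ht (hmem _ (Or.inr h)))
  -- t a t = a⁻¹
  have hR : t * a * t = a⁻¹ := by
    rcases hconjmem t htt with h | h
    · exfalso
      apply key t ht
      have := congrArg (fun y => y * t) h
      rw [mul_assoc, htt, mul_one] at this
      rw [this]
    · exact h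
  -- the lift is an isomorphism
  have hinj : Function.Injective (dLift a t ha htt hR) := by
    rw [injective_iff_map_eq_one]
    rintro (i | i) hx
    · have hone : a ^ i.val = 1 := hx
      have hdvd : orderOf a ∣ i.val := orderOf_dvd_of_pow_eq_one hone
      rw [h1] at hdvd
      have hv : i.val = 0 := Nat.eq_zero_of_dvd_of_lt hdvd (ZMod.val_lt i)
      rw [DihedralGroup.one_def]
      exact congrArg DihedralGroup.r (ZMod.val_eq_zero i |>.1 hv)
    · exfalso
      have : t * a ^ i.val = 1 := hx
      have h2 : t = (a ^ i.val)⁻¹ := eq_inv_of_mul_eq_one_left this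
      exact ht (h2 ▸ inv_mem (pow_mem (mem_zpowers a) _))
  have hsurj : Function.Surjective (dLift a t ha htt hR) := by
    have hpow : ∀ x : G, x ∈ zpowers a → ∃ i : ZMod n, a ^ i.val = x := by
      intro x hx
      obtain ⟨m, hm⟩ := mem_powers_iff_mem_zpowers.2 hx
      exact ⟨(m : ZMod n), by rw [ZMod.val_natCast, pow_mod_of_pow_eq_one ha]; exact hm⟩
    intro x
    by_cases hx : x ∈ zpowers a
    · obtain ⟨i, hi⟩ := hpow x hx
      exact ⟨DihedralGroup.r i, hi⟩
    · have htx : t * x ∈ zpowers a := by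
        by_contra hu
        have hxx : x * x = 1 := hsq x (fun h => hx (hmem _ (Or.inl h))) (fun h => hx (hmem _ (Or.inr h)))
        have huu : (t * x) * (t * x) = 1 :=
          hsq _ (fun h => hu (hmem _ (Or.inl h))) (fun h => hu (hmem _ (Or.inr h)))
        -- x a x = a⁻¹ (else x commutes with a)
        have hxax : x * a * x = a⁻¹ := by
          rcases hconjmem x hxx with h | h
          · exfalso
            apply key x hx
            have := congrArg (fun y => y * x) h
            rw [mul_assoc, hxx, mul_one] at this
            rw [this]
          · exact h
        -- then t x commutes with a
        apply key (t * x) hu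
        have hxinv : x⁻¹ = x := inv_eq_of_mul_eq_one_right hxx
        have htinv : t⁻¹ = t := inv_eq_of_mul_eq_one_right htt
        have huinv : (t * x)⁻¹ = t * x := inv_eq_of_mul_eq_one_right huu
        have h2 : (t * x) * a * (t * x) = a := by
          calc (t * x) * a * (t * x) = (t * x) * a * (t * x)⁻¹ := by rw [huinv]
            _ = t * (x * a * x⁻¹) * t⁻¹ := by group
            _ = t * (x * a * x) * t := by rw [hxinv, htinv]
            _ = t * a⁻¹ * t := by rw [hxax]
            _ = (t * t) * a * (t * t) := by rw [← hR]; group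
            _ = a := by rw [htt, one_mul, mul_one]
        have h3 := congrArg (fun y => y * (t * x)) h2
        rw [mul_assoc, huu, mul_one] at h3
        rw [h3]
      obtain ⟨i, hi⟩ := hpow _ htx
      refine ⟨DihedralGroup.sr i, ?_⟩
      show t * a ^ i.val = x
      rw [hi, ← mul_assoc, htt, one_mul]
  exact ⟨(MulEquiv.ofBijective _ ⟨hinj, hsurj⟩).symm⟩

end Cases
open Subgroup Finset

section Count

variable {G : Type*} [Group G]

lemma isCyclic_zpowers (g : G) : IsCyclic ↥(zpowers g) := by
  refine ⟨⟨⟨g, mem_zpowers g⟩, ?_⟩⟩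
  rintro ⟨x, k, rfl⟩
  exact ⟨k, Subtype.ext (by simp)⟩

lemma isCyclic_iff_exists_zpowers {H : Subgroup G} :
    IsCyclic ↥H ↔ ∃ g : G, zpowers g = H := by
  constructor
  · rintro ⟨⟨⟨g, hg⟩, hgen⟩⟩
    refine ⟨g, le_antisymm (zpowers_le.2 hg) ?_⟩
    intro x hx
    obtain ⟨k, hk⟩ := hgen ⟨x, hx⟩
    exact ⟨k, by simpa using congrArg Subtype.val hk⟩
  · rintro ⟨g, rfl⟩
    exact _root_.isCyclic_zpowers g

lemma count_eq_card_range :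
    Nat.card {H : Subgroup G // IsCyclic H} = Nat.card (Set.range (zpowers : G → Subgroup G)) :=
  Nat.card_congr (Equiv.subtypeEquivRight (fun H => by
    rw [isCyclic_iff_exists_zpowers]; exact Iff.rfl))

lemma count_congr {K : Type*} [Group K] (e : G ≃* K) :
    Nat.card {H : Subgroup G // IsCyclic H} = Nat.card {H : Subgroup K // IsCyclic H} := by
  apply Nat.card_congr
  have hcomp : ∀ (H : Subgroup G), (H.map e.toMonoidHom).map e.symm.toMonoidHom = H := by
    intro H
    rw [Subgroup.map_map]
    have h : e.symm.toMonoidHom.comp e.toMonoidHom = MonoidHom.id G := by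
      ext x; simp
    rw [h, Subgroup.map_id]
  have hcomp' : ∀ (H : Subgroup K), (H.map e.symm.toMonoidHom).map e.toMonoidHom = H := by
    intro H
    rw [Subgroup.map_map]
    have h : e.toMonoidHom.comp e.symm.toMonoidHom = MonoidHom.id K := by
      ext x; simp
    rw [h, Subgroup.map_id]
  refine ⟨fun H => ⟨H.1.map e.toMonoidHom, ?_⟩, fun H => ⟨H.1.map e.symm.toMonoidHom, ?_⟩, ?_, ?_⟩
  · have := H.2
    exact isCyclic_of_surjective (e.subgroupMap H.1) (e.subgroupMap H.1).surjective
  · have := H.2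
    exact isCyclic_of_surjective (e.symm.subgroupMap H.1) (e.symm.subgroupMap H.1).surjective
  · intro H
    exact Subtype.ext (hcomp H.1)
  · intro H
    exact Subtype.ext (hcomp' H.1)

lemma count_image_eq [Fintype G] [DecidableEq G] :
    Nat.card {H : Subgroup G // IsCyclic H} =
      (Finset.univ.image fun a : G =>
        Finset.univ.filter fun x => ∃ k : Fin (Fintype.card G), a ^ (k : ℕ) = x).card := by
  classical
  rw [count_eq_card_range]
  have h0 : Nat.card (Set.range (zpowers : G → Subgroup G)) =
      (Finset.univ.image (zpowers : G → Subgroup G)).card := by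
    rw [← Set.image_univ, ← Finset.coe_univ, ← Finset.coe_image, Nat.card_coe_set_eq,
      Set.ncard_coe_finset]
  rw [h0]
  set F : Subgroup G → Finset G := fun H => Finset.univ.filter fun x => x ∈ H with hF
  have hFinj : Function.Injective F := by
    intro H K h
    ext x
    have := Finset.ext_iff.1 h x
    simpa [hF] using this
  have hS : ∀ a : G, F (zpowers a) =
      Finset.univ.filter fun x => ∃ k : Fin (Fintype.card G), a ^ (k : ℕ) = x := by
    intro a
    ext x
    simp only [hF, Finset.mem_filter, Finset.mem_univ, true_and]
    constructor
    · intro hx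
      obtain ⟨m, hm⟩ := mem_powers_iff_mem_zpowers.2 hx
      refine ⟨⟨m % orderOf a, lt_of_lt_of_le (Nat.mod_lt _ (orderOf_pos a)) orderOf_le_card_univ⟩, ?_⟩
      show a ^ (m % orderOf a) = x
      rw [pow_eq_pow_iff_modEq.2 (Nat.mod_modEq m (orderOf a))]
      exact hm
    · rintro ⟨k, rfl⟩
      exact pow_mem (mem_zpowers a) _
  calc (Finset.univ.image (zpowers : G → Subgroup G)).card
      = ((Finset.univ.image (zpowers : G → Subgroup G)).image F).card :=
        (Finset.card_image_of_injective _ hFinj).symm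
    _ = (Finset.univ.image (F ∘ (zpowers : G → Subgroup G))).card := by rw [Finset.image_image]
    _ = _ := by
        congr 1
        apply Finset.image_congr
        intro a _
        exact hS a

end Count

noncomputable def permIso : DihedralGroup 3 ≃* Equiv.Perm (Fin 3) :=
  MulEquiv.ofBijective
    (dLift (G := Equiv.Perm (Fin 3)) (finRotate 3) (Equiv.swap 0 1) (by decide) (by decide)
      (by decide))
    (by decide)

section Classify

variable {G : Type*} [Group G] [Finite G]

lemma classify (a : G) (ha2 : a * a ≠ 1)
    (hsq : ∀ x : G, x ≠ a → x ≠ a⁻¹ → x * x = 1) :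
    (Nonempty (G ≃* Multiplicative (ZMod 3)) ∨
     Nonempty (G ≃* Multiplicative (ZMod 4)) ∨
     Nonempty (G ≃* Equiv.Perm (Fin 3)) ∨
     Nonempty (G ≃* DihedralGroup 4)) := by
  classical
  have ha1 : a ≠ 1 := by rintro rfl; simp at ha2
  have hne1 : orderOf a ≠ 1 := by simpa [orderOf_eq_one_iff] using ha1
  have hne2 : orderOf a ≠ 2 := by
    intro h'
    apply ha2
    have := pow_orderOf_eq_one a
    rwa [h', pow_two] at this
  have horder : orderOf a = 3 ∨ orderOf a = 4 := by
    by_cases h3 : a * a = a⁻¹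
    · left
      have hcube : a ^ (3 : ℕ) = 1 := by
        rw [show (3:ℕ) = 2 + 1 from rfl, pow_add, pow_two, pow_one, h3, inv_mul_cancel]
      have hdvd : orderOf a ∣ 3 := orderOf_dvd_of_pow_eq_one hcube
      rcases (Nat.prime_three.eq_one_or_self_of_dvd _ hdvd) with h' | h'
      · exact absurd h' hne1
      · exact h'
    · right
      have hns : a * a ≠ a := fun hh => ha1 (mul_left_cancel (hh.trans (mul_one a).symm))
      have h4 : (a * a) * (a * a) = 1 := hsq (a * a) hns h3
      have hq : a ^ (4 : ℕ) = 1 := by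
        rw [show (4:ℕ) = 2 + 2 from rfl, pow_add, pow_two]
        exact h4
      have hdvd : orderOf a ∣ 4 := orderOf_dvd_of_pow_eq_one hq
      have hle : orderOf a ≤ 4 := Nat.le_of_dvd (by norm_num) hdvd
      have hpos : 0 < orderOf a := orderOf_pos a
      have hne3 : orderOf a ≠ 3 := by
        intro h'
        rw [h'] at hdvd
        norm_num at hdvd
      omega
  by_cases hall : ∀ x : G, x ∈ zpowers a
  · rcases horder with hor | hor
    · exact Or.inl (cyclic_case (n := 3) hor hall)
    · exact Or.inr (Or.inl (cyclic_case (n := 4) hor hall))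
  · push_neg at hall
    obtain ⟨t, ht⟩ := hall
    rcases horder with hor | hor
    · refine Or.inr (Or.inr (Or.inl ?_))
      obtain ⟨e⟩ := dihedral_case (n := 3) hor ha2 hsq ht
      exact ⟨e.trans permIso⟩
    · exact Or.inr (Or.inr (Or.inr (dihedral_case (n := 4) hor ha2 hsq ht)))

end Classify
section Comb

lemma aux_surj_card {α β : Type*} [Fintype α] [Fintype β] (f : α → β) (y₁ y₂ : α)
    (h12 : y₁ ≠ y₂) (hs : ∀ b, ∃ a, f a = b ∧ a ≠ y₁ ∧ a ≠ y₂) :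
    Fintype.card β ≤ Fintype.card α - 2 := by
  classical
  have hsub : Set.SurjOn f (((Finset.univ.erase y₁).erase y₂ : Finset α) : Set α)
      ((Finset.univ : Finset β) : Set β) := by
    intro b _
    obtain ⟨x, hfx, h1, h2⟩ := hs b
    exact ⟨x, by simp [Finset.mem_erase, h1, h2], hfx⟩
  have hle := Finset.card_le_card_of_surjOn f hsub
  rw [Finset.card_univ] at hle
  have h2 : ((Finset.univ.erase y₁).erase y₂).card = Fintype.card α - 1 - 1 := by
    rw [Finset.card_erase_of_mem (by simp [Finset.mem_erase, h12.symm]),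
      Finset.card_erase_of_mem (by simp), Finset.card_univ]
  omega

variable {G : Type*} [Group G] [Finite G]

lemma forward_struct
    (h : Nat.card {H : Subgroup G // IsCyclic H} = Nat.card G - 1) :
    ∃ a : G, a * a ≠ 1 ∧ ∀ x : G, x ≠ a → x ≠ a⁻¹ → x * x = 1 := by
  classical
  have : Fintype G := Fintype.ofFinite G
  have : Fintype {H : Subgroup G // IsCyclic H} := Fintype.ofFinite _
  set q : G → {H : Subgroup G // IsCyclic H} := fun g => ⟨zpowers g, _root_.isCyclic_zpowers g⟩
    with hq
  have hqsurj : Function.Surjective q := by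
    rintro ⟨H, hH⟩
    obtain ⟨⟨g, hg⟩, hgen⟩ := hH.exists_generator
    refine ⟨g, Subtype.ext ?_⟩
    show zpowers g = H
    refine le_antisymm (zpowers_le.2 hg) ?_
    intro x hx
    obtain ⟨k, hk⟩ := hgen ⟨x, hx⟩
    exact ⟨k, by simpa using congrArg Subtype.val hk⟩
  have hcard : Fintype.card {H : Subgroup G // IsCyclic H} = Fintype.card G - 1 := by
    rw [← Nat.card_eq_fintype_card, ← Nat.card_eq_fintype_card]; exact h
  have hlt : Fintype.card {H : Subgroup G // IsCyclic H} < Fintype.card G := by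
    have : 0 < Fintype.card G := Fintype.card_pos
    omega
  obtain ⟨u, v, huv, hquv⟩ := Fintype.exists_ne_map_eq_of_card_lt q hlt
  have hzuv : zpowers u = zpowers v := congrArg Subtype.val hquv
  -- helper : square-1 elements have tiny zpowers
  have hz2 : ∀ w : G, w * w = 1 → ∀ x ∈ zpowers w, x = 1 ∨ x = w := by
    intro w hw x hx
    obtain ⟨k, hk⟩ := hx
    change w ^ k = x at hk
    rw [← hk]
    have hw2 : w ^ (2 : ℤ) = 1 := by rw [zpow_two, hw]
    rcases Int.even_or_odd k with ⟨m, hm⟩ | ⟨m, hm⟩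
    · left
      rw [hm, ← two_mul, zpow_mul, hw2, one_zpow]
    · right
      rw [hm, zpow_add, zpow_mul, hw2, one_zpow, one_mul, zpow_one]
  -- at least one of u, v is not an involution
  have hkey : ∀ w w' : G, w ≠ w' → zpowers w = zpowers w' → w * w ≠ 1 ∨ w' * w' ≠ 1 := by
    intro w w' hne hz
    by_contra hc
    push_neg at hc
    obtain ⟨hw, hw'⟩ := hc
    have hwmem : w ∈ zpowers w' := by rw [← hz]; exact mem_zpowers w
    rcases hz2 w' hw' w hwmem with h1 | h1
    · have hw'1 : w' = 1 := zpowers_eq_bot.1 (by rw [← hz, h1]; exact zpowers_eq_bot.2 rfl)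
      exact hne (h1.trans hw'1.symm)
    · exact hne h1
  -- produce the distinguished element
  have main : ∀ a : G, a * a ≠ 1 →
      ∃ a : G, a * a ≠ 1 ∧ ∀ x : G, x ≠ a → x ≠ a⁻¹ → x * x = 1 := by
    intro a ha2
    refine ⟨a, ha2, ?_⟩
    intro x hxa hxa'
    by_contra hx2
    have ha1 : a ≠ 1 := by rintro rfl; simp at ha2
    have haainv : a ≠ a⁻¹ := fun hh => ha2 (by nth_rewrite 2 [hh]; simp)
    have hxxinv : x ≠ x⁻¹ := fun hh => hx2 (by nth_rewrite 2 [hh]; simp)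
    have h12 : a⁻¹ ≠ x⁻¹ := fun hh => hxa (inv_injective hh.symm)
    have hqinv : ∀ w : G, q w = q w⁻¹ := fun w => Subtype.ext (zpowers_inv (g := w)).symm
    have hs : ∀ b, ∃ g, q g = b ∧ g ≠ a⁻¹ ∧ g ≠ x⁻¹ := by
      intro b
      obtain ⟨g, hg⟩ := hqsurj b
      by_cases hga : g = a⁻¹
      · refine ⟨a, ?_, haainv, fun hh => hxa' (by rw [hh]; simp)⟩
        rw [hqinv a, ← hga, hg]
      · by_cases hgx : g = x⁻¹
        · refine ⟨x, ?_, hxa', hxxinv⟩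
          rw [hqinv x, ← hgx, hg]
        · exact ⟨g, hg, hga, hgx⟩
    have hle := aux_surj_card q a⁻¹ x⁻¹ h12 hs
    have hnt : Nontrivial G := ⟨a, 1, ha1⟩
    have h2le : 2 ≤ Fintype.card G := Fintype.one_lt_card
    omega
  rcases hkey u v huv hzuv with h | h
  · exact main u h
  · exact main v h

end Comb

theorem stmt_1 (G : Type*) [Group G] [Finite G] :
    Nat.card {H : Subgroup G // IsCyclic H} = Nat.card G - 1 ↔
      (Nonempty (G ≃* Multiplicative (ZMod 3)) ∨
       Nonempty (G ≃* Multiplicative (ZMod 4)) ∨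
       Nonempty (G ≃* Equiv.Perm (Fin 3)) ∨
       Nonempty (G ≃* DihedralGroup 4)) := by
  constructor
  · intro h
    obtain ⟨a, ha2, hsq⟩ := forward_struct h
    exact classify a ha2 hsq
  · intro h
    rcases h with h | h | h | h <;> obtain ⟨e⟩ := h
    · rw [count_congr e, Nat.card_congr e.toEquiv, count_image_eq, Nat.card_eq_fintype_card]
      decide
    · rw [count_congr e, Nat.card_congr e.toEquiv, count_image_eq, Nat.card_eq_fintype_card]
      decide
    · rw [count_congr e, Nat.card_congr e.toEquiv, count_image_eq, Nat.card_eq_fintype_card]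
      decide
    · rw [count_congr e, Nat.card_congr e.toEquiv, count_image_eq, Nat.card_eq_fintype_card]
      decide
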